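/- Let r > 2 be a real number. Then there exists a constant d_r > 0 depending only on r such that for all U = (u₁, u₂) and V = (v₁, v₂) in ℝ² and all i, j ∈ {1, 2}, one has | (|U|^{r-2} u_i - |V|^{r-2} v_i)(u_j - v_j) | ≤ d_r (|U|^{r-2} + |V|^{r-2}) |U - V|². Moreover one may take d_r = (r-1)/2 when r ≥ 4, d_r = 3/2 when 3 < r < 4, and d_r = 1 when 2 < r ≤ 3. -/

import Mathlib

open Real

/-- AM-GM step: for `p ≥ 1`, `0 ≤ x`, `0 ≤ a`: `p * (a * x^(p-1)) ≤ a^p + (p-1) * x^p`. -/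
private lemma amgm_step (p a x : ℝ) (hp : 1 ≤ p) (ha : 0 ≤ a) (hx : 0 ≤ x) :
    p * (a * x ^ (p - 1)) ≤ a ^ p + (p - 1) * x ^ p := by
  have hp0 : (0:ℝ) < p := by linarith
  have hw2 : (0:ℝ) ≤ (p - 1) / p := div_nonneg (by linarith) hp0.le
  have hw : 1 / p + (p - 1) / p = 1 := by field_simp; ring
  have h := Real.geom_mean_le_arith_mean2_weighted
    (by positivity : (0:ℝ) ≤ 1 / p) hw2
    (by positivity : (0:ℝ) ≤ a ^ p) (by positivity : (0:ℝ) ≤ x ^ p) hw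
  have h1 : (a ^ p) ^ (1 / p) = a := by
    rw [← Real.rpow_mul ha, mul_one_div, div_self hp0.ne', Real.rpow_one]
  have h2 : (x ^ p) ^ ((p - 1) / p) = x ^ (p - 1) := by
    rw [← Real.rpow_mul hx, mul_div_assoc', mul_comm, mul_div_assoc, div_self hp0.ne', mul_one]
  rw [h1, h2] at h
  have := mul_le_mul_of_nonneg_left h hp0.le
  calc p * (a * x ^ (p - 1))
      ≤ p * (1 / p * a ^ p + (p - 1) / p * x ^ p) := mul_le_mul_of_nonneg_left h hp0.le
    _ = a ^ p + (p - 1) * x ^ p := by field_simp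

private lemma rpow_succ' (x p : ℝ) (hx : 0 ≤ x) (hp : 0 < p) :
    x ^ p * x = x ^ (p + 1) := by
  rcases eq_or_lt_of_le hx with h | h
  · rw [← h]
    rw [Real.zero_rpow hp.ne', Real.zero_rpow (by linarith : p + 1 ≠ 0), zero_mul]
  · rw [Real.rpow_add_one h.ne']

private lemma key1 (p : ℝ) (hp : 1 ≤ p) (a b : ℝ) (hb : 0 ≤ b) (hab : b ≤ a) :
    a ^ (p + 1) - b ^ (p + 1) ≤ (p + 1) / 2 * (a ^ p + b ^ p) * (a - b) := by
  have ha : 0 ≤ a := hb.trans hab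
  rcases eq_or_lt_of_le hb with hb0 | hb0
  · -- b = 0
    rw [← hb0]
    rw [Real.zero_rpow (by linarith : p + 1 ≠ 0), Real.zero_rpow (by linarith : p ≠ 0)]
    have hea : a ^ p * a = a ^ (p + 1) := rpow_succ' a p ha (by linarith)
    have hap : 0 ≤ a ^ p := Real.rpow_nonneg ha p
    nlinarith [Real.rpow_nonneg ha (p + 1)]
  · -- 0 < b ≤ a
    set F : ℝ → ℝ := fun x => (p + 1) / 2 * (a ^ p + x ^ p) * (a - x) + x ^ (p + 1) with hF
    have hderiv : ∀ x ∈ Set.Ioo b a, HasDerivAt F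
        ((p + 1) / 2 * (p * x ^ (p - 1)) * (a - x)
          + (p + 1) / 2 * (a ^ p + x ^ p) * (-1) + (p + 1) * x ^ p) x := by
      intro x hx
      have hx0 : x ≠ 0 := by have := hb0.trans hx.1; positivity
      have d1 : HasDerivAt (fun x : ℝ => x ^ p) (p * x ^ (p - 1)) x :=
        Real.hasDerivAt_rpow_const (Or.inl hx0)
      have d2 : HasDerivAt (fun x : ℝ => x ^ (p + 1)) ((p + 1) * x ^ (p + 1 - 1)) x :=
        Real.hasDerivAt_rpow_const (Or.inl hx0)
      have d3 : HasDerivAt (fun x : ℝ => (p + 1) / 2 * (a ^ p + x ^ p))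
          ((p + 1) / 2 * (p * x ^ (p - 1))) x := ((d1.const_add (a ^ p)).const_mul _)
      have d4 : HasDerivAt (fun x : ℝ => a - x) (-1) x := by
        simpa using (hasDerivAt_id x).const_sub a
      have := (d3.mul d4).add d2
      rw [add_sub_cancel_right] at this
      exact this.congr_of_eventuallyEq (Filter.Eventually.of_forall fun y => rfl)
    have hnonpos : ∀ x ∈ Set.Ioo b a, deriv F x ≤ 0 := by
      intro x hx
      rw [(hderiv x hx).deriv]
      have hx0 : 0 < x := hb0.trans hx.1
      have hgm := amgm_step p a x hp ha hx0.le
      have hxx : x ^ (p - 1) * x = x ^ p := by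
        have := rpow_succ' x (p - 1) hx0.le
        rcases eq_or_lt_of_le hp with h1 | h1
        · rw [← h1]; simp [Real.rpow_one]
        · have := rpow_succ' x (p - 1) hx0.le (by linarith)
          simpa [sub_add_cancel] using this
      have expand : (p + 1) / 2 * (p * x ^ (p - 1)) * (a - x)
          + (p + 1) / 2 * (a ^ p + x ^ p) * (-1) + (p + 1) * x ^ p
          = (p + 1) / 2 * (p * (a * x ^ (p - 1)) - p * (x ^ (p - 1) * x) + x ^ p - a ^ p) := by
        ring
      rw [expand, hxx]
      have hin : p * (a * x ^ (p - 1)) - p * x ^ p + x ^ p - a ^ p ≤ 0 := by linarith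
      have := mul_le_mul_of_nonneg_left hin (show (0:ℝ) ≤ (p + 1) / 2 by linarith)
      simpa using this
    have hcont : Continuous F := by
      have hc1 : Continuous fun x : ℝ => x ^ p :=
        continuous_iff_continuousAt.mpr fun x =>
          Real.continuousAt_rpow_const x p (Or.inr (by linarith))
      have hc2 : Continuous fun x : ℝ => x ^ (p + 1) :=
        continuous_iff_continuousAt.mpr fun x =>
          Real.continuousAt_rpow_const x (p + 1) (Or.inr (by linarith))
      exact ((continuous_const.mul (continuous_const.add hc1)).mul
        (continuous_const.sub continuous_id)).add hc2
    have hanti : AntitoneOn F (Set.Icc b a) := by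
      apply antitoneOn_of_deriv_nonpos (convex_Icc b a) hcont.continuousOn
      · rw [interior_Icc]
        exact fun x hx => (hderiv x hx).differentiableAt.differentiableWithinAt
      · rw [interior_Icc]; exact hnonpos
    have hFa : F a ≤ F b := hanti (Set.left_mem_Icc.mpr hab) (Set.right_mem_Icc.mpr hab) hab
    have hFa' : F a = a ^ (p + 1) := by simp [hF]
    rw [hFa'] at hFa
    simp only [hF] at hFa
    linarith

private lemma key2 (p : ℝ) (hp0 : 0 < p) (hp : p ≤ 1) (a b : ℝ) (hb : 0 ≤ b) (hab : b ≤ a) :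
    a ^ (p + 1) - b ^ (p + 1) ≤ 1 * (a ^ p + b ^ p) * (a - b) := by
  have ha : 0 ≤ a := hb.trans hab
  have ea : a ^ p * a = a ^ (p + 1) := rpow_succ' a p ha hp0
  have eb : b ^ p * b = b ^ (p + 1) := rpow_succ' b p hb hp0
  have hmix : a ^ p * b ≤ a * b ^ p := by
    rcases eq_or_lt_of_le hb with hb0 | hb0
    · rw [← hb0, Real.zero_rpow hp0.ne', mul_zero, mul_zero]
    · have h1 : b ^ (1 - p) ≤ a ^ (1 - p) := Real.rpow_le_rpow hb hab (by linarith)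
      have e1 : a ^ p * a ^ (1 - p) = a := by
        rw [← Real.rpow_add (hb0.trans_le hab), add_sub_cancel, Real.rpow_one]
      have e2 : b ^ p * b ^ (1 - p) = b := by
        rw [← Real.rpow_add hb0, add_sub_cancel, Real.rpow_one]
      have hap : 0 ≤ a ^ p := Real.rpow_nonneg ha p
      have hbp : 0 ≤ b ^ p := Real.rpow_nonneg hb p
      calc a ^ p * b = a ^ p * (b ^ p * b ^ (1 - p)) := by rw [e2]
        _ ≤ a ^ p * (b ^ p * a ^ (1 - p)) := by
            apply mul_le_mul_of_nonneg_left (mul_le_mul_of_nonneg_left h1 hbp) hap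
        _ = (a ^ p * a ^ (1 - p)) * b ^ p := by ring
        _ = a * b ^ p := by rw [e1]
  nlinarith [ea, eb, hmix]

private lemma coord_le_norm (x : EuclideanSpace ℝ (Fin 2)) (i : Fin 2) : |x i| ≤ ‖x‖ := by
  rw [EuclideanSpace.norm_eq]
  have h : |x i| = Real.sqrt (‖x i‖ ^ 2) := by
    rw [Real.sqrt_sq (norm_nonneg _)]; exact (Real.norm_eq_abs _).symm
  rw [h]
  apply Real.sqrt_le_sqrt
  exact Finset.single_le_sum (f := fun k => ‖x k‖ ^ 2) (fun k _ => sq_nonneg _)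
    (Finset.mem_univ i)

private lemma aux (p d : ℝ) (hp : 0 < p) (hd1 : 1 ≤ d)
    (hkey : ∀ a b : ℝ, 0 ≤ b → b ≤ a →
      a ^ (p + 1) - b ^ (p + 1) ≤ d * (a ^ p + b ^ p) * (a - b))
    (U V : EuclideanSpace ℝ (Fin 2)) (i j : Fin 2) (hba : ‖V‖ ≤ ‖U‖) :
    |(‖U‖ ^ p * U i - ‖V‖ ^ p * V i) * (U j - V j)| ≤
      d * (‖U‖ ^ p + ‖V‖ ^ p) * ‖U - V‖ ^ 2 := by
  set a := ‖U‖ with hadef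
  set b := ‖V‖ with hbdef
  set s := ‖U - V‖ with hsdef
  have hs0 : (0:ℝ) ≤ s := norm_nonneg _
  have hb0 : (0:ℝ) ≤ b := norm_nonneg _
  have ha0 : (0:ℝ) ≤ a := norm_nonneg _
  have hap : (0:ℝ) ≤ a ^ p := Real.rpow_nonneg ha0 p
  have hbp : (0:ℝ) ≤ b ^ p := Real.rpow_nonneg hb0 p
  have hpow : b ^ p ≤ a ^ p := Real.rpow_le_rpow hb0 hba hp.le
  have hj : |U j - V j| ≤ s := coord_le_norm (U - V) j
  have hi : |U i - V i| ≤ s := coord_le_norm (U - V) i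
  have hVi : |V i| ≤ b := coord_le_norm V i
  have hab2 : a - b ≤ s := by
    have := abs_norm_sub_norm_le U V
    calc a - b ≤ |a - b| := le_abs_self _
      _ ≤ s := this
  have hk := hkey a b hb0 hba
  have ea : a ^ p * a = a ^ (p + 1) := rpow_succ' a p ha0 hp
  have eb : b ^ p * b = b ^ (p + 1) := rpow_succ' b p hb0 hp
  have h1 : |a ^ p * U i - b ^ p * V i| ≤ a ^ p * s + (a ^ p - b ^ p) * b := by
    have e : a ^ p * U i - b ^ p * V i = a ^ p * (U i - V i) + (a ^ p - b ^ p) * V i := by ring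
    rw [e]
    refine (abs_add_le _ _).trans ?_
    rw [abs_mul, abs_mul]
    have t1 : |a ^ p| * |U i - V i| ≤ a ^ p * s := by
      rw [abs_of_nonneg hap]; exact mul_le_mul_of_nonneg_left hi hap
    have t2 : |a ^ p - b ^ p| * |V i| ≤ (a ^ p - b ^ p) * b := by
      rw [abs_of_nonneg (by linarith)]
      exact mul_le_mul_of_nonneg_left hVi (by linarith)
    linarith
  have hda : a ^ p ≤ d * (a ^ p + b ^ p) := by nlinarith
  have h2 : a ^ p * s + (a ^ p - b ^ p) * b ≤ d * (a ^ p + b ^ p) * s := by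
    nlinarith [mul_nonneg (sub_nonneg.mpr hda) (sub_nonneg.mpr hab2)]
  calc |(a ^ p * U i - b ^ p * V i) * (U j - V j)|
      = |a ^ p * U i - b ^ p * V i| * |U j - V j| := abs_mul _ _
    _ ≤ (a ^ p * s + (a ^ p - b ^ p) * b) * s := by
        apply mul_le_mul h1 hj (abs_nonneg _)
        nlinarith
    _ ≤ (d * (a ^ p + b ^ p) * s) * s := mul_le_mul_of_nonneg_right h2 hs0
    _ = d * (a ^ p + b ^ p) * s ^ 2 := by ring

theorem locLip (r : ℝ) (hr : 2 < r) :
    ∃ d : ℝ, 0 < d ∧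
      d = (if 4 ≤ r then (r - 1) / 2 else if 3 < r then 3 / 2 else 1) ∧
      ∀ (U V : EuclideanSpace ℝ (Fin 2)) (i j : Fin 2),
        |(‖U‖ ^ (r - 2) * U i - ‖V‖ ^ (r - 2) * V i) * (U j - V j)| ≤
          d * (‖U‖ ^ (r - 2) + ‖V‖ ^ (r - 2)) * ‖U - V‖ ^ 2 := by
  set d : ℝ := (if 4 ≤ r then (r - 1) / 2 else if 3 < r then 3 / 2 else 1) with hddef
  have hd0 : 0 < d := by
    rw [hddef]; split_ifs <;> norm_num; linarith
  have hd1 : 1 ≤ d := by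
    rw [hddef]; split_ifs <;> norm_num; linarith
  refine ⟨d, hd0, rfl, ?_⟩
  intro U V i j
  set p : ℝ := r - 2 with hpdef
  have hp : 0 < p := by rw [hpdef]; linarith
  have hkey : ∀ a b : ℝ, 0 ≤ b → b ≤ a →
      a ^ (p + 1) - b ^ (p + 1) ≤ d * (a ^ p + b ^ p) * (a - b) := by
    intro a b hb hab
    have hXnn : (0:ℝ) ≤ (a ^ p + b ^ p) * (a - b) := by
      have := Real.rpow_nonneg (hb.trans hab) p
      have := Real.rpow_nonneg hb p
      nlinarith
    rw [hddef]
    split_ifs with h1 h2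
    · have := key1 p (by rw [hpdef]; linarith) a b hb hab
      have he : (p + 1) / 2 = (r - 1) / 2 := by rw [hpdef]; ring
      rw [he] at this
      exact this
    · have := key1 p (by rw [hpdef]; push_neg at h1; linarith) a b hb hab
      calc a ^ (p + 1) - b ^ (p + 1) ≤ (p + 1) / 2 * (a ^ p + b ^ p) * (a - b) := this
        _ = (p + 1) / 2 * ((a ^ p + b ^ p) * (a - b)) := by ring
        _ ≤ 3 / 2 * ((a ^ p + b ^ p) * (a - b)) := by
            apply mul_le_mul_of_nonneg_right _ hXnn
            push_neg at h1; rw [hpdef]; linarith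
        _ = 3 / 2 * (a ^ p + b ^ p) * (a - b) := by ring
    · push_neg at h2
      exact key2 p hp (by rw [hpdef]; linarith) a b hb hab
  rcases le_total ‖V‖ ‖U‖ with h | h
  · exact aux p d hp hd1 hkey U V i j h
  · have := aux p d hp hd1 hkey V U i j h
    have e1 : (‖V‖ ^ p * V i - ‖U‖ ^ p * U i) * (V j - U j)
        = (‖U‖ ^ p * U i - ‖V‖ ^ p * V i) * (U j - V j) := by ring
    rw [e1, norm_sub_rev V U] at this
    have e2 : d * (‖V‖ ^ p + ‖U‖ ^ p) * ‖U - V‖ ^ 2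
        = d * (‖U‖ ^ p + ‖V‖ ^ p) * ‖U - V‖ ^ 2 := by ring
    rw [e2] at this
    exact this
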